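/- Let u ≥ 0 be a real number and k, j natural numbers with (k+j)·u < 1. If θ_k and θ_j are real numbers with |θ_k| ≤ γ_k(u) and |θ_j| ≤ γ_j(u), then |(1+θ_k)(1+θ_j) − 1| ≤ γ_{k+j}(u). -/

import Mathlib

/-- For `u ≥ 0` and `t` with `t·u < 1`, `γ_t(u) := t·u/(1 − t·u)`. -/
noncomputable def gam (t u : ℝ) : ℝ := t * u / (1 - t * u)

/-- If `|θ_k| ≤ γ_k(u)`, `|θ_j| ≤ γ_j(u)` and `(k+j)·u < 1`, then
`(1+θ_k)(1+θ_j) = 1 + θ_{k+j}` with `|θ_{k+j}| ≤ γ_{k+j}(u)`. -/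
theorem stmt_1 (u : ℝ) (hu : 0 ≤ u) (k j : ℕ) (hkj : ((k : ℝ) + j) * u < 1)
    (θk θj : ℝ) (hθk : |θk| ≤ gam k u) (hθj : |θj| ≤ gam j u) :
    |(1 + θk) * (1 + θj) - 1| ≤ gam ((k : ℝ) + j) u := by
  have hk0 : (0:ℝ) ≤ k := Nat.cast_nonneg k
  have hj0 : (0:ℝ) ≤ j := Nat.cast_nonneg j
  have ha : 0 ≤ (k:ℝ) * u := by positivity
  have hb : 0 ≤ (j:ℝ) * u := by positivity
  have hab : (k:ℝ) * u + (j:ℝ) * u < 1 := by nlinarith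
  have h1 : 0 < 1 - (k:ℝ) * u := by nlinarith
  have h2 : 0 < 1 - (j:ℝ) * u := by nlinarith
  have h3 : 0 < 1 - ((k:ℝ) + j) * u := by nlinarith
  set A := gam k u with hA
  set B := gam j u with hB
  have hA0 : 0 ≤ A := div_nonneg ha h1.le
  have hB0 : 0 ≤ B := div_nonneg hb h2.le
  have habs : |(1 + θk) * (1 + θj) - 1| ≤ A + B + A * B := by
    have he : (1 + θk) * (1 + θj) - 1 = θk + θj + θk * θj := by ring
    rw [he]
    calc |θk + θj + θk * θj| ≤ |θk + θj| + |θk * θj| := abs_add_le _ _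
      _ ≤ (|θk| + |θj|) + |θk| * |θj| := by
          rw [abs_mul]; exact add_le_add (abs_add_le _ _) le_rfl
      _ ≤ (A + B) + A * B := by
          have := abs_nonneg θk
          have := abs_nonneg θj
          nlinarith
      _ = A + B + A * B := by ring
  refine habs.trans ?_
  have hsum : A + B + A * B = ((k:ℝ)*u + (j:ℝ)*u - (k:ℝ)*u*((j:ℝ)*u)) /
      ((1 - (k:ℝ)*u) * (1 - (j:ℝ)*u)) := by
    rw [hA, hB]
    unfold gam
    have h1' := h1.ne'
    have h2' := h2.ne'
    rw [eq_div_iff (mul_ne_zero h1' h2')]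
    have e1 : (k:ℝ)*u/(1-(k:ℝ)*u) * (1-(k:ℝ)*u) = (k:ℝ)*u := div_mul_cancel₀ _ h1'
    have e2 : (j:ℝ)*u/(1-(j:ℝ)*u) * (1-(j:ℝ)*u) = (j:ℝ)*u := div_mul_cancel₀ _ h2'
    linear_combination (1 - (j:ℝ)*u + (j:ℝ)*u) * e1 + (1 - (k:ℝ)*u + (k:ℝ)*u/(1-(k:ℝ)*u)*(1-(k:ℝ)*u)) * e2
  rw [hsum]
  unfold gam
  rw [div_le_div_iff₀ (by positivity) h3]
  nlinarith [mul_nonneg ha hb, mul_nonneg (mul_nonneg ha hb) (add_nonneg ha hb)]
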